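/- Let X and K be types, let A = FreeAlgebra (ZMod 2) X, and let S = FreeAlgebra (ZMod 2) (X ⊕ K × Bool); write α_k = ι(inr(k,false)) and β_k = ι(inr(k,true)). Let i : A → S be the algebra map induced by x ↦ ι(inl x) and let τ : S → A be the algebra map induced by inl x ↦ ι x and inr(k,b) ↦ 0. Let D be a ℤ/2-linear derivation of S satisfying: D(ι(inl x)) lies in the range of i for every x ∈ X, D(α_k) = 0 for every k, and D(β_k) = α_k for every k. Then there exists a ℤ/2-linear map H : S → S such that H(D s) + D(H s) = i(τ s) + s for all s ∈ S. -/

import Mathlib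

namespace StabilizationAux

open FreeAlgebra

variable {X K : Type*}

/-- abbreviation for the stabilized algebra -/
local notation "S" => FreeAlgebra (ZMod 2) (X ⊕ K × Bool)

/-- the element of the free algebra corresponding to a word -/
noncomputable def wE (w : List (X ⊕ K × Bool)) : FreeAlgebra (ZMod 2) (X ⊕ K × Bool) :=
  (w.map (ι (ZMod 2))).prod

@[simp] lemma wE_nil : wE (X := X) (K := K) [] = 1 := rfl

@[simp] lemma wE_cons (g : X ⊕ K × Bool) (v : List (X ⊕ K × Bool)) :
    wE (g :: v) = ι (ZMod 2) g * wE v := rfl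

/-- the homotopy on words -/
noncomputable def Hw : List (X ⊕ K × Bool) → FreeAlgebra (ZMod 2) (X ⊕ K × Bool)
  | [] => 0
  | (Sum.inl x) :: v => ι (ZMod 2) (Sum.inl x) * Hw v
  | (Sum.inr (k, false)) :: v => ι (ZMod 2) (Sum.inr (k, true)) * wE v
  | (Sum.inr (_, true)) :: _ => 0

noncomputable def eS : FreeAlgebra (ZMod 2) (X ⊕ K × Bool) ≃ₐ[ZMod 2]
    MonoidAlgebra (ZMod 2) (FreeMonoid (X ⊕ K × Bool)) :=
  equivMonoidAlgebraFreeMonoid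

lemma eS_ι (g : X ⊕ K × Bool) :
    eS (ι (ZMod 2) g) = MonoidAlgebra.single (FreeMonoid.of g) (1 : ZMod 2) := by
  simp [eS, equivMonoidAlgebraFreeMonoid, MonoidAlgebra.of_apply]

lemma eS_wE (w : List (X ⊕ K × Bool)) :
    eS (wE w) = MonoidAlgebra.single (FreeMonoid.ofList w) (1 : ZMod 2) := by
  induction w with
  | nil => simpa using (MonoidAlgebra.one_def :
      (1 : MonoidAlgebra (ZMod 2) (FreeMonoid (X ⊕ K × Bool))) = _)
  | cons g v ih =>
      rw [wE_cons, map_mul, eS_ι, ih, MonoidAlgebra.single_mul_single, one_mul,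
        FreeMonoid.ofList_cons]

/-- the homotopy as a linear map -/
noncomputable def Hmap : FreeAlgebra (ZMod 2) (X ⊕ K × Bool) →ₗ[ZMod 2]
    FreeAlgebra (ZMod 2) (X ⊕ K × Bool) :=
  (Finsupp.lsum (ZMod 2) fun w : FreeMonoid (X ⊕ K × Bool) =>
      LinearMap.toSpanSingleton (ZMod 2) _ (Hw (FreeMonoid.toList w))).comp
    ((MonoidAlgebra.coeffLinearEquiv (ZMod 2)).toLinearMap ∘ₗ (eS (X := X) (K := K)).toLinearMap)

lemma Hmap_wE (w : List (X ⊕ K × Bool)) : Hmap (wE w) = Hw w := by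
  have h1 : (eS (X := X) (K := K)).toLinearMap (wE w)
      = MonoidAlgebra.single (FreeMonoid.ofList w) (1 : ZMod 2) := by
    rw [AlgEquiv.toLinearMap_apply, eS_wE]
  rw [Hmap, LinearMap.comp_apply, LinearMap.comp_apply]
  erw [h1]
  rw [LinearEquiv.coe_coe, MonoidAlgebra.coeffLinearEquiv_apply, MonoidAlgebra.coeff_single]
  erw [Finsupp.lsum_single]
  rw [LinearMap.toSpanSingleton_apply, one_smul, FreeMonoid.toList_ofList]

lemma ext_on_words (F G : FreeAlgebra (ZMod 2) (X ⊕ K × Bool) →ₗ[ZMod 2]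
      FreeAlgebra (ZMod 2) (X ⊕ K × Bool))
    (h : ∀ w : List (X ⊕ K × Bool), F (wE w) = G (wE w)) : F = G := by
  have key : F.comp (eS (X := X) (K := K)).symm.toLinearMap
      = G.comp (eS (X := X) (K := K)).symm.toLinearMap := by
    apply MonoidAlgebra.lhom_ext'
    intro a
    apply LinearMap.ext_ring
    have h1 : (eS (X := X) (K := K)).symm (MonoidAlgebra.single a (1 : ZMod 2)) = wE (FreeMonoid.toList a) := by
      apply (eS (X := X) (K := K)).injective
      rw [AlgEquiv.apply_symm_apply, eS_wE, FreeMonoid.ofList_toList]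
    simp only [LinearMap.comp_apply, MonoidAlgebra.lsingle_apply, AlgEquiv.toLinearMap_apply]
    erw [h1]
    exact h _
  ext s
  have := LinearMap.congr_fun key (eS (X := X) (K := K) s)
  simpa using this

end StabilizationAux

open StabilizationAux

/-- Stabilization of a free ℤ/2-DGA admits a chain homotopy between `i ∘ τ` and
the identity: if `D` is a derivation of the stabilized free algebra whose values
on the old generators lie in the image of the inclusion `i`, with `D α_k = 0`
and `D β_k = α_k` on the new generator pairs, then there is a ℤ/2-linear map `H`
with `H ∘ D + D ∘ H = i ∘ τ + id`. -/
theorem stabilization_chain_homotopy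
    {X K : Type*}
    (i : FreeAlgebra (ZMod 2) X →ₐ[ZMod 2] FreeAlgebra (ZMod 2) (X ⊕ K × Bool))
    (hi : i = FreeAlgebra.lift (ZMod 2)
      (fun x : X => FreeAlgebra.ι (ZMod 2) (Sum.inl x : X ⊕ K × Bool)))
    (τ : FreeAlgebra (ZMod 2) (X ⊕ K × Bool) →ₐ[ZMod 2] FreeAlgebra (ZMod 2) X)
    (hτ : τ = FreeAlgebra.lift (ZMod 2)
      (Sum.elim (fun x : X => FreeAlgebra.ι (ZMod 2) x) (fun _ : K × Bool => 0)))
    (D : FreeAlgebra (ZMod 2) (X ⊕ K × Bool) →ₗ[ZMod 2]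
      FreeAlgebra (ZMod 2) (X ⊕ K × Bool))
    (hD : ∀ a b : FreeAlgebra (ZMod 2) (X ⊕ K × Bool),
      D (a * b) = D a * b + a * D b)
    (hDX : ∀ x : X, D (FreeAlgebra.ι (ZMod 2) (Sum.inl x : X ⊕ K × Bool))
      ∈ Set.range i)
    (hDα : ∀ k : K,
      D (FreeAlgebra.ι (ZMod 2) (Sum.inr (k, false) : X ⊕ K × Bool)) = 0)
    (hDβ : ∀ k : K,
      D (FreeAlgebra.ι (ZMod 2) (Sum.inr (k, true) : X ⊕ K × Bool))
        = FreeAlgebra.ι (ZMod 2) (Sum.inr (k, false) : X ⊕ K × Bool)) :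
    ∃ H : FreeAlgebra (ZMod 2) (X ⊕ K × Bool) →ₗ[ZMod 2]
        FreeAlgebra (ZMod 2) (X ⊕ K × Bool),
      ∀ s : FreeAlgebra (ZMod 2) (X ⊕ K × Bool),
        H (D s) + D (H s) = i (τ s) + s := by
  classical
  set Hm : FreeAlgebra (ZMod 2) (X ⊕ K × Bool) →ₗ[ZMod 2]
      FreeAlgebra (ZMod 2) (X ⊕ K × Bool) := Hmap with hHm
  -- characteristic two
  have two : ∀ t : FreeAlgebra (ZMod 2) (X ⊕ K × Bool), t + t = 0 := by
    intro t
    rw [← two_smul (ZMod 2) t, (by decide : (2 : ZMod 2) = 0), zero_smul]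
  have cancel : ∀ t u v : FreeAlgebra (ZMod 2) (X ⊕ K × Bool),
      t + u + (t + v) = u + v := by
    intro t u v
    rw [add_add_add_comm, two, zero_add]
  -- basic values of the maps on generators
  have hiι : ∀ x : X, i (FreeAlgebra.ι (ZMod 2) x)
      = FreeAlgebra.ι (ZMod 2) (Sum.inl x : X ⊕ K × Bool) := by
    intro x; simp [hi]
  have hτinl : ∀ x : X, τ (FreeAlgebra.ι (ZMod 2) (Sum.inl x : X ⊕ K × Bool))
      = FreeAlgebra.ι (ZMod 2) x := by
    intro x; simp [hτ]
  have hτinr : ∀ p : K × Bool, τ (FreeAlgebra.ι (ZMod 2) (Sum.inr p : X ⊕ K × Bool)) = 0 := by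
    intro p; simp [hτ]
  have hD1 : D 1 = 0 := by
    have := hD 1 1
    simp only [one_mul, mul_one] at this
    exact (left_eq_add.mp this)
  -- structure lemmas for the homotopy
  have Hm1 : Hm 1 = 0 := by
    have := Hmap_wE (X := X) (K := K) []
    simpa [Hw] using this
  have Hinl : ∀ (x : X) (s : FreeAlgebra (ZMod 2) (X ⊕ K × Bool)),
      Hm (FreeAlgebra.ι (ZMod 2) (Sum.inl x : X ⊕ K × Bool) * s)
        = FreeAlgebra.ι (ZMod 2) (Sum.inl x : X ⊕ K × Bool) * Hm s := by
    intro x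
    have := ext_on_words
      (Hm ∘ₗ LinearMap.mulLeft (ZMod 2) (FreeAlgebra.ι (ZMod 2) (Sum.inl x : X ⊕ K × Bool)))
      (LinearMap.mulLeft (ZMod 2) (FreeAlgebra.ι (ZMod 2) (Sum.inl x : X ⊕ K × Bool)) ∘ₗ Hm)
      (fun w => by
        simp only [LinearMap.comp_apply, LinearMap.mulLeft_apply, hHm]
        rw [← wE_cons, Hmap_wE, Hmap_wE, Hw])
    intro s
    simpa using LinearMap.congr_fun this s
  have Hα : ∀ (k : K) (s : FreeAlgebra (ZMod 2) (X ⊕ K × Bool)),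
      Hm (FreeAlgebra.ι (ZMod 2) (Sum.inr (k, false) : X ⊕ K × Bool) * s)
        = FreeAlgebra.ι (ZMod 2) (Sum.inr (k, true) : X ⊕ K × Bool) * s := by
    intro k
    have := ext_on_words
      (Hm ∘ₗ LinearMap.mulLeft (ZMod 2) (FreeAlgebra.ι (ZMod 2) (Sum.inr (k, false) : X ⊕ K × Bool)))
      (LinearMap.mulLeft (ZMod 2) (FreeAlgebra.ι (ZMod 2) (Sum.inr (k, true) : X ⊕ K × Bool)))
      (fun w => by
        simp only [LinearMap.comp_apply, LinearMap.mulLeft_apply, hHm]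
        rw [← wE_cons, Hmap_wE, Hw])
    intro s
    simpa using LinearMap.congr_fun this s
  have Hβ : ∀ (k : K) (s : FreeAlgebra (ZMod 2) (X ⊕ K × Bool)),
      Hm (FreeAlgebra.ι (ZMod 2) (Sum.inr (k, true) : X ⊕ K × Bool) * s) = 0 := by
    intro k
    have := ext_on_words
      (Hm ∘ₗ LinearMap.mulLeft (ZMod 2) (FreeAlgebra.ι (ZMod 2) (Sum.inr (k, true) : X ⊕ K × Bool)))
      (0 : FreeAlgebra (ZMod 2) (X ⊕ K × Bool) →ₗ[ZMod 2] FreeAlgebra (ZMod 2) (X ⊕ K × Bool))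
      (fun w => by
        simp only [LinearMap.comp_apply, LinearMap.mulLeft_apply, hHm, LinearMap.zero_apply]
        rw [← wE_cons, Hmap_wE, Hw])
    intro s
    simpa using LinearMap.congr_fun this s
  -- the homotopy commutes with left multiplication by elements of the image of i
  have Hi : ∀ a : FreeAlgebra (ZMod 2) X, ∀ s : FreeAlgebra (ZMod 2) (X ⊕ K × Bool),
      Hm (i a * s) = i a * Hm s := by
    intro a
    induction a using FreeAlgebra.induction with
    | grade0 r =>
        intro s
        rw [AlgHom.commutes, ← Algebra.smul_def, map_smul, Algebra.smul_def]
    | grade1 x =>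
        intro s
        rw [hiι]
        exact Hinl x s
    | mul a b ha hb =>
        intro s
        rw [map_mul i a b, mul_assoc, ha, hb, ← mul_assoc]
    | add a b ha hb =>
        intro s
        rw [map_add i a b, add_mul, map_add Hm, ha, hb, add_mul]
  -- main computation on words
  have main : ∀ w : List (X ⊕ K × Bool),
      Hm (D (wE w)) + D (Hm (wE w)) = i (τ (wE w)) + wE w := by
    intro w
    induction w with
    | nil =>
        simp only [wE_nil, hD1, Hm1, map_zero, map_one]
        rw [two 1, add_zero]
    | cons g v ih =>
        cases g with
        | inl x =>
            obtain ⟨a, ha⟩ := hDX x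
            rw [wE_cons]
            rw [hD, ← ha, map_add Hm, Hi, Hinl, Hinl, hD, ← ha]
            rw [cancel, ← mul_add, ih, map_mul τ, hτinl, map_mul i, hiι, mul_add]
        | inr p =>
            obtain ⟨k, b⟩ := p
            cases b with
            | false =>
                rw [wE_cons, hD, hDα, zero_mul, zero_add, Hα, Hα, hD, hDβ,
                  map_mul τ, hτinr, zero_mul, map_zero i, zero_add]
                rw [add_comm (FreeAlgebra.ι (ZMod 2) (Sum.inr (k, false) : X ⊕ K × Bool) * wE v),
                  ← add_assoc, two, zero_add]
            | true =>
                rw [wE_cons, hD, hDβ, map_add Hm, Hα, Hβ, add_zero, Hβ, map_zero D, add_zero,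
                  map_mul τ, hτinr, zero_mul, map_zero i, zero_add]
  refine ⟨Hm, ?_⟩
  have final := ext_on_words (Hm ∘ₗ D + D ∘ₗ Hm)
    (i.toLinearMap ∘ₗ τ.toLinearMap + LinearMap.id)
    (fun w => by simpa using main w)
  intro s
  simpa using LinearMap.congr_fun final s
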